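/- Let H be a complex Hilbert space, M ≥ 0, let A, A₀ : ℝ → B(H) be continuous in operator norm, and let U, U₀ : ℝ × ℝ → B(H) satisfy: ‖U(t, s)‖ ≤ M and ‖U₀(t, s)‖ ≤ M for all t, s; U(s, s) = U₀(s, s) = 1; for each x ∈ H the map t ↦ U(0, t)x is differentiable with derivative −i U(0, t) A(t) x, and the map t ↦ U₀(t, 0)x is differentiable with derivative i A₀(t) U₀(t, 0) x; and U(0, t) U(t, 0) = U(t, 0) U(0, t) = 1 and U₀(0, t) U₀(t, 0) = U₀(t, 0) U₀(0, t) = 1 for all t. Assume ∫₀^∞ ‖A(t) − A₀(t)‖ dt < ∞. Then the limits W = lim_{t→+∞} U(0, t) U₀(t, 0) and V = lim_{t→+∞} U₀(0, t) U(t, 0) exist in the operator norm of B(H), and W V = V W = 1, so W is invertible with inverse V. -/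

import Mathlib

open MeasureTheory Filter Topology

lemma strong_cont' {H : Type*} [NormedAddCommGroup H] [NormedSpace ℂ H]
    (M : ℝ) (T : ℝ → H →L[ℂ] H) (hbd : ∀ t, ‖T t‖ ≤ M)
    (hc : ∀ z : H, Continuous fun t => T t z)
    {z : ℝ → H} (hz : Continuous z) : Continuous fun t => T t (z t) := by
  rw [continuous_iff_continuousAt]
  intro t
  have h1 : Tendsto (fun t' => T t' (z t' - z t)) (𝓝 t) (𝓝 0) := by
    apply squeeze_zero_norm
      (fun t' => ((T t').le_opNorm _).trans
        (mul_le_mul_of_nonneg_right (hbd t') (norm_nonneg _)))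
    have : Tendsto (fun t' => M * ‖z t' - z t‖) (𝓝 t) (𝓝 (M * ‖z t - z t‖)) :=
      (continuous_const.mul ((hz.sub continuous_const).norm)).tendsto t
    simpa using this
  have h2 : Tendsto (fun t' => T t' (z t)) (𝓝 t) (𝓝 (T t (z t))) := (hc (z t)).tendsto t
  have := h1.add h2
  simp only [zero_add] at this
  refine this.congr fun t' => ?_
  simp [map_sub]

lemma hasDerivAt_apply_comp' {H : Type*} [NormedAddCommGroup H] [NormedSpace ℂ H]
    (M : ℝ) (T : ℝ → H →L[ℂ] H) (hbd : ∀ t, ‖T t‖ ≤ M)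
    (d : ℝ → H → H)
    (hT : ∀ (x : H) (t : ℝ), HasDerivAt (fun t' => T t' x) (d t x) t)
    {y : ℝ → H} {y' : H} {t : ℝ} (hy : HasDerivAt y y' t) :
    HasDerivAt (fun t' => T t' (y t')) (d t (y t) + T t y') t := by
  rw [hasDerivAt_iff_isLittleO]
  have e1 := hasDerivAt_iff_isLittleO.1 (hT (y t) t)
  have e2 : (fun t' => T t' (y t' - y t - (t' - t) • y')) =o[𝓝 t] fun t' => t' - t := by
    refine Asymptotics.IsBigO.trans_isLittleO ?_ (hasDerivAt_iff_isLittleO.1 hy)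
    exact Asymptotics.isBigO_of_le' (c := M) _ fun t' =>
      ((T t').le_opNorm _).trans (mul_le_mul_of_nonneg_right (hbd t') (norm_nonneg _))
  have hco : Tendsto (fun t' => T t' y') (𝓝 t) (𝓝 (T t y')) := (hT y' t).continuousAt
  have hw : Tendsto (fun t' => T t' y' - T t y') (𝓝 t) (𝓝 0) := by
    simpa using hco.sub (tendsto_const_nhds (x := T t y'))
  have e3 : (fun t' => (t' - t) • (T t' y' - T t y')) =o[𝓝 t] fun t' => t' - t := by
    have h := (Asymptotics.isBigO_refl (fun t' : ℝ => t' - t) (𝓝 t)).smul_isLittleO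
      ((Asymptotics.isLittleO_one_iff ℝ).2 hw)
    simpa using h
  have := (e1.add e2).add e3
  refine this.congr' (Eventually.of_forall fun t' => ?_) EventuallyEq.rfl
  simp only [map_sub, ContinuousLinearMap.map_smul_of_tower, smul_add, smul_sub]
  abel

/-- Existence and invertibility of the (out) Møller/wave operator by the Cook argument:
if `U` and `U₀` are uniformly bounded invertible evolution families generated by `A` and
`A₀` respectively, and `∫₀^∞ ‖A(t) - A₀(t)‖ dt < ∞`, then
`W = lim_{t→+∞} U(0,t) U₀(t,0)` and `V = lim_{t→+∞} U₀(0,t) U(t,0)` exist in operator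
norm and are mutually inverse. -/
theorem moller_operator_exists_and_invertible
    {H : Type*} [NormedAddCommGroup H] [InnerProductSpace ℂ H] [CompleteSpace H]
    (M : ℝ) (hM : 0 ≤ M)
    (A A₀ : ℝ → H →L[ℂ] H) (hA : Continuous A) (hA₀ : Continuous A₀)
    (U U₀ : ℝ → ℝ → H →L[ℂ] H)
    (hUbd : ∀ t s : ℝ, ‖U t s‖ ≤ M) (hU₀bd : ∀ t s : ℝ, ‖U₀ t s‖ ≤ M)
    (hUid : ∀ s : ℝ, U s s = 1) (hU₀id : ∀ s : ℝ, U₀ s s = 1)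
    (hUderiv : ∀ (x : H) (t : ℝ),
      HasDerivAt (fun t' : ℝ => U 0 t' x) (-(Complex.I • U 0 t (A t x))) t)
    (hU₀deriv : ∀ (x : H) (t : ℝ),
      HasDerivAt (fun t' : ℝ => U₀ t' 0 x) (Complex.I • A₀ t (U₀ t 0 x)) t)
    (hUinv : ∀ t : ℝ, U 0 t ∘L U t 0 = 1 ∧ U t 0 ∘L U 0 t = 1)
    (hU₀inv : ∀ t : ℝ, U₀ 0 t ∘L U₀ t 0 = 1 ∧ U₀ t 0 ∘L U₀ 0 t = 1)
    (hdiff : IntegrableOn (fun t : ℝ => ‖A t - A₀ t‖) (Set.Ici 0)) :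
    ∃ W V : H →L[ℂ] H,
      Tendsto (fun t : ℝ => U 0 t ∘L U₀ t 0) atTop (nhds W) ∧
      Tendsto (fun t : ℝ => U₀ 0 t ∘L U t 0) atTop (nhds V) ∧
      W ∘L V = 1 ∧ V ∘L W = 1 := by
  set φ : ℝ → H →L[ℂ] H := fun t => U 0 t ∘L U₀ t 0 with hφdef
  set ψ : ℝ → H →L[ℂ] H := fun t => U₀ 0 t ∘L U t 0 with hψdef
  set b : ℝ → ℝ := fun t => ‖A t - A₀ t‖ with hbdef
  have hbcont : Continuous b := (hA.sub hA₀).norm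
  set G : ℝ → ℝ := fun t => ∫ s in (0:ℝ)..t, b s with hGdef
  have hGt : Tendsto G atTop (𝓝 (∫ s in Set.Ioi (0:ℝ), b s)) :=
    intervalIntegral_tendsto_integral_Ioi 0 (hdiff.mono_set Set.Ioi_subset_Ici_self)
      tendsto_id
  have hGc : CauchySeq G := hGt.cauchySeq
  -- strong continuity of U 0 ·
  have hUcont : ∀ z : H, Continuous fun t => U 0 t z := fun z =>
    continuous_iff_continuousAt.2 fun t => (hUderiv z t).continuousAt
  have hU₀cont : ∀ x : H, Continuous fun t => U₀ t 0 x := fun x =>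
    continuous_iff_continuousAt.2 fun t => (hU₀deriv x t).continuousAt
  -- derivative of φ · x
  have hderiv : ∀ (x : H) (t : ℝ),
      HasDerivAt (fun t' => U 0 t' (U₀ t' 0 x))
        (Complex.I • U 0 t ((A₀ t - A t) (U₀ t 0 x))) t := by
    intro x t
    have h := hasDerivAt_apply_comp' M (fun t => U 0 t) (fun t => hUbd 0 t)
      (fun t z => -(Complex.I • U 0 t (A t z))) (fun z t => hUderiv z t) (hU₀deriv x t)
    convert h using 1
    simp only [ContinuousLinearMap.sub_apply, map_sub, ContinuousLinearMap.map_smul, smul_sub]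
    abel
  -- continuity of the derivative
  have hcontD : ∀ x : H,
      Continuous fun t => Complex.I • U 0 t ((A₀ t - A t) (U₀ t 0 x)) := by
    intro x
    refine Continuous.const_smul ?_ _
    exact strong_cont' M (fun t => U 0 t) (fun t => hUbd 0 t) hUcont
      ((hA₀.sub hA).clm_apply (hU₀cont x))
  -- integral bound
  have hbound : ∀ (x : H) (s t : ℝ),
      ‖U 0 t (U₀ t 0 x) - U 0 s (U₀ s 0 x)‖ ≤ M * M * ‖x‖ * |G t - G s| := by
    intro x s t
    have hftc := intervalIntegral.integral_eq_sub_of_hasDerivAt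
      (f := fun t' => U 0 t' (U₀ t' 0 x)) (fun u _ => hderiv x u)
      ((hcontD x).intervalIntegrable s t)
    rw [← hftc]
    have hle : ‖∫ u in s..t, Complex.I • U 0 u ((A₀ u - A u) (U₀ u 0 x))‖
        ≤ |∫ u in s..t, M * M * ‖x‖ * b u| := by
      refine intervalIntegral.norm_integral_le_abs_of_norm_le ?_
        ((continuous_const.mul hbcont).intervalIntegrable s t)
      refine ae_of_all _ fun u => ?_
      have h1 : ‖(A₀ u - A u) (U₀ u 0 x)‖ ≤ b u * (M * ‖x‖) := by
        refine ((A₀ u - A u).le_opNorm _).trans ?_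
        rw [show ‖A₀ u - A u‖ = b u from norm_sub_rev _ _]
        exact mul_le_mul_of_nonneg_left
          (((U₀ u 0).le_opNorm x).trans
            (mul_le_mul_of_nonneg_right (hU₀bd u 0) (norm_nonneg x)))
          (norm_nonneg _)
      have h2 : ‖Complex.I • U 0 u ((A₀ u - A u) (U₀ u 0 x))‖
          = ‖U 0 u ((A₀ u - A u) (U₀ u 0 x))‖ := by
        rw [norm_smul, Complex.norm_I, one_mul]
      rw [h2]
      calc ‖U 0 u ((A₀ u - A u) (U₀ u 0 x))‖
          ≤ M * ‖(A₀ u - A u) (U₀ u 0 x)‖ :=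
            ((U 0 u).le_opNorm _).trans
              (mul_le_mul_of_nonneg_right (hUbd 0 u) (norm_nonneg _))
        _ ≤ M * (b u * (M * ‖x‖)) := mul_le_mul_of_nonneg_left h1 hM
        _ = M * M * ‖x‖ * b u := by ring
    refine hle.trans (le_of_eq ?_)
    rw [intervalIntegral.integral_const_mul]
    rw [show (∫ u in s..t, b u) = G t - G s from
      (intervalIntegral.integral_interval_sub_left (hbcont.intervalIntegrable 0 t)
        (hbcont.intervalIntegrable 0 s)).symm]
    rw [abs_mul, abs_of_nonneg (by positivity : (0:ℝ) ≤ M * M * ‖x‖)]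
  -- operator norm bound
  have hop : ∀ s t : ℝ, ‖φ t - φ s‖ ≤ M * M * |G t - G s| := by
    intro s t
    refine ContinuousLinearMap.opNorm_le_bound _ (by positivity) fun x => ?_
    have := hbound x s t
    simp only [hφdef, ContinuousLinearMap.sub_apply, ContinuousLinearMap.comp_apply]
    calc ‖U 0 t (U₀ t 0 x) - U 0 s (U₀ s 0 x)‖ ≤ M * M * ‖x‖ * |G t - G s| := this
      _ = M * M * |G t - G s| * ‖x‖ := by ring
  -- φ is Cauchy
  have hφc : CauchySeq φ := by
    rw [Metric.cauchySeq_iff']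
    intro ε hε
    obtain ⟨N, hN⟩ := Metric.cauchySeq_iff'.1 hGc (ε / (M * M + 1)) (by positivity)
    refine ⟨N, fun n hn => ?_⟩
    have h2 := hN n hn
    rw [dist_eq_norm] at h2 ⊢
    calc ‖φ n - φ N‖ ≤ M * M * |G n - G N| := hop N n
      _ = M * M * ‖G n - G N‖ := by rw [Real.norm_eq_abs]
      _ ≤ M * M * (ε / (M * M + 1)) :=
          mul_le_mul_of_nonneg_left h2.le (by positivity)
      _ < (M * M + 1) * (ε / (M * M + 1)) :=
          mul_lt_mul_of_pos_right (by nlinarith) (by positivity)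
      _ = ε := by field_simp
  obtain ⟨W, hW⟩ := cauchySeq_tendsto_of_complete hφc
  -- inverse relations
  have key1 : ∀ t, φ t ∘L ψ t = 1 := by
    intro t
    ext x
    have e1 := DFunLike.congr_fun (hU₀inv t).2 (U t 0 x)
    have e2 := DFunLike.congr_fun (hUinv t).1 x
    simp only [hφdef, hψdef, ContinuousLinearMap.comp_apply,
      ContinuousLinearMap.one_apply] at e1 e2 ⊢
    rw [e1, e2]
  have key2 : ∀ t, ψ t ∘L φ t = 1 := by
    intro t
    ext x
    have e1 := DFunLike.congr_fun (hUinv t).2 (U₀ t 0 x)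
    have e2 := DFunLike.congr_fun (hU₀inv t).1 x
    simp only [hφdef, hψdef, ContinuousLinearMap.comp_apply,
      ContinuousLinearMap.one_apply] at e1 e2 ⊢
    rw [e1, e2]
  have hψbd : ∀ t, ‖ψ t‖ ≤ M * M := by
    intro t
    refine (ContinuousLinearMap.opNorm_comp_le _ _).trans ?_
    exact mul_le_mul (hU₀bd 0 t) (hUbd t 0) (norm_nonneg _) hM
  have hψsub : ∀ s t : ℝ, ψ t - ψ s = ψ t ∘L ((φ s - φ t) ∘L ψ s) := by
    intro s t
    rw [ContinuousLinearMap.sub_comp, ContinuousLinearMap.comp_sub,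
      key1 s, ← ContinuousLinearMap.comp_assoc, key2 t,
      ContinuousLinearMap.one_def, ContinuousLinearMap.comp_id,
      ContinuousLinearMap.id_comp]
  have hψnorm : ∀ s t : ℝ, ‖ψ t - ψ s‖ ≤ (M * M) * (M * M) * ‖φ s - φ t‖ := by
    intro s t
    rw [hψsub s t]
    calc ‖ψ t ∘L ((φ s - φ t) ∘L ψ s)‖ ≤ ‖ψ t‖ * ‖(φ s - φ t) ∘L ψ s‖ :=
          ContinuousLinearMap.opNorm_comp_le _ _
      _ ≤ ‖ψ t‖ * (‖φ s - φ t‖ * ‖ψ s‖) :=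
          mul_le_mul_of_nonneg_left (ContinuousLinearMap.opNorm_comp_le _ _) (norm_nonneg _)
      _ ≤ (M * M) * (‖φ s - φ t‖ * (M * M)) :=
          mul_le_mul (hψbd t)
            (mul_le_mul_of_nonneg_left (hψbd s) (norm_nonneg _))
            (by positivity) (mul_nonneg hM hM)
      _ = (M * M) * (M * M) * ‖φ s - φ t‖ := by ring
  have hψc : CauchySeq ψ := by
    rw [Metric.cauchySeq_iff']
    intro ε hε
    obtain ⟨N, hN⟩ := Metric.cauchySeq_iff'.1 hφc (ε / ((M * M) * (M * M) + 1))
      (by positivity)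
    refine ⟨N, fun n hn => ?_⟩
    have h2 := hN n hn
    rw [dist_eq_norm] at h2 ⊢
    calc ‖ψ n - ψ N‖ ≤ (M * M) * (M * M) * ‖φ N - φ n‖ := hψnorm N n
      _ = (M * M) * (M * M) * ‖φ n - φ N‖ := by rw [norm_sub_rev]
      _ ≤ (M * M) * (M * M) * (ε / ((M * M) * (M * M) + 1)) :=
          mul_le_mul_of_nonneg_left h2.le (by positivity)
      _ < ((M * M) * (M * M) + 1) * (ε / ((M * M) * (M * M) + 1)) :=
          mul_lt_mul_of_pos_right (by nlinarith) (by positivity)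
      _ = ε := by field_simp
  obtain ⟨V, hV⟩ := cauchySeq_tendsto_of_complete hψc
  refine ⟨W, V, hW, hV, ?_, ?_⟩
  · have h : Tendsto (fun t => φ t * ψ t) atTop (𝓝 (W * V)) := hW.mul hV
    have h1 : (fun t : ℝ => φ t * ψ t) = fun _ => (1 : H →L[ℂ] H) := by
      funext t; rw [ContinuousLinearMap.mul_def]; exact key1 t
    rw [h1] at h
    have := tendsto_nhds_unique h tendsto_const_nhds
    rw [← ContinuousLinearMap.mul_def, this]
  · have h : Tendsto (fun t => ψ t * φ t) atTop (𝓝 (V * W)) := hV.mul hW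
    have h1 : (fun t : ℝ => ψ t * φ t) = fun _ => (1 : H →L[ℂ] H) := by
      funext t; rw [ContinuousLinearMap.mul_def]; exact key2 t
    rw [h1] at h
    have := tendsto_nhds_unique h tendsto_const_nhds
    rw [← ContinuousLinearMap.mul_def, this]
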